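/- arXiv:math/0411346 — 5 statements merged into one kernel-verified Lean document; each statement's English description precedes it below -/
import Mathlib

section
/- Let R be a commutative ring, A and E modules over R, A₀ ⊆ A a submodule, and cl : A₀ → E an R-linear map. Let T₁, T₂ : A → A be R-linear endomorphisms with T₁∘T₂ = T₂∘T₁ and Tᵢ(A₀) ⊆ A₀ for i = 1,2, and let a₁, a₂ ∈ R satisfy cl(Tᵢ x) = aᵢ • cl(x) for all x ∈ A₀. Let Q₁, Q₂ ∈ R[Z] be polynomials such that Qᵢ(Tᵢ)(v) ∈ A₀ for every v ∈ A. Then for every v ∈ A one has Q₁(a₁) • cl(Q₂(T₂)(v)) = Q₂(a₂) • cl(Q₁(T₁)(v)); in particular the elements cl(Q₁(T₁)(v)) and cl(Q₂(T₂)(v)) of E are proportional. -/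
open Polynomial

private lemma commute_aeval_aux {R S : Type*} [CommRing R] [Ring S] [Algebra R S]
    {x y : S} (h : Commute x y) (Q : Polynomial R) : Commute x (aeval y Q) := by
  induction Q using Polynomial.induction_on with
  | C c => simpa using Algebra.commute_algebraMap_right c x
  | add p q hp hq => simpa [map_add] using hp.add_right hq
  | monomial n c ih =>
      simp only [map_mul, pow_succ, ← mul_assoc, map_pow, aeval_X] at ih ⊢
      exact ih.mul_right h

private lemma key_aux {R A E : Type*} [CommRing R] [AddCommGroup A] [Module R A]
    [AddCommGroup E] [Module R E]
    (A₀ : Submodule R A) (cl : A₀ →ₗ[R] E)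
    (T : A →ₗ[R] A) (hT : ∀ x ∈ A₀, T x ∈ A₀) (a : R)
    (ha : ∀ x : A₀, cl ⟨T x, hT x x.2⟩ = a • cl x)
    (Q : Polynomial R) (x : A₀) :
    ∃ y : A₀, (y : A) = aeval T Q (x : A) ∧ cl y = Polynomial.eval a Q • cl x := by
  induction Q using Polynomial.induction_on generalizing x with
  | C c =>
      refine ⟨c • x, ?_, by simp⟩
      simp [Module.algebraMap_end_apply]
  | add p q hp hq =>
      obtain ⟨yp, hyp, hcp⟩ := hp x
      obtain ⟨yq, hyq, hcq⟩ := hq x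
      refine ⟨yp + yq, ?_, ?_⟩
      · simp [hyp, hyq]
      · simp [hcp, hcq, add_smul]
  | monomial n c ih =>
      obtain ⟨y, hy, hcy⟩ := ih ⟨T x, hT x x.2⟩
      refine ⟨y, ?_, ?_⟩
      · rw [hy]
        simp only [map_mul, map_pow, aeval_X, aeval_C, pow_succ,
          Module.algebraMap_end_apply]
        simp [Module.End.mul_apply]
      · rw [hcy, ha x, smul_smul]
        simp [pow_succ, mul_assoc]

/-- **Proposition 3.1** (algebraic content).  Let `A₀ ⊆ A` be a submodule,
`cl : A₀ →ₗ[R] E`, and `T₁, T₂` commuting endomorphisms of `A` preserving `A₀`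
and acting on the image of `cl` by the scalars `a₁, a₂`.  If `Q₁, Q₂` are
polynomials with `Qᵢ(Tᵢ)(A) ⊆ A₀`, then for every `v ∈ A` the elements
`cl (Q₁(T₁) v)` and `cl (Q₂(T₂) v)` of `E` are proportional:
`Q₁(a₁) • cl (Q₂(T₂) v) = Q₂(a₂) • cl (Q₁(T₁) v)`. -/
theorem prop_3_1 {R A E : Type*} [CommRing R] [AddCommGroup A] [Module R A]
    [AddCommGroup E] [Module R E]
    (A₀ : Submodule R A) (cl : A₀ →ₗ[R] E)
    (T₁ T₂ : A →ₗ[R] A) (hcomm : T₁ ∘ₗ T₂ = T₂ ∘ₗ T₁)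
    (hT₁ : ∀ x ∈ A₀, T₁ x ∈ A₀) (hT₂ : ∀ x ∈ A₀, T₂ x ∈ A₀)
    (a₁ a₂ : R)
    (ha₁ : ∀ x : A₀, cl ⟨T₁ x, hT₁ x x.2⟩ = a₁ • cl x)
    (ha₂ : ∀ x : A₀, cl ⟨T₂ x, hT₂ x x.2⟩ = a₂ • cl x)
    (Q₁ Q₂ : Polynomial R)
    (hQ₁ : ∀ v : A, Polynomial.aeval T₁ Q₁ v ∈ A₀)
    (hQ₂ : ∀ v : A, Polynomial.aeval T₂ Q₂ v ∈ A₀) :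
    ∀ v : A,
      Polynomial.eval a₁ Q₁ • cl ⟨Polynomial.aeval T₂ Q₂ v, hQ₂ v⟩ =
        Polynomial.eval a₂ Q₂ • cl ⟨Polynomial.aeval T₁ Q₁ v, hQ₁ v⟩ := by
  intro v
  have hc : Commute T₁ T₂ := hcomm
  have hcQ : Commute (aeval T₁ Q₁) (aeval T₂ Q₂) :=
    commute_aeval_aux (commute_aeval_aux hc.symm Q₁).symm Q₂
  obtain ⟨y₁, hy₁, hcy₁⟩ := key_aux A₀ cl T₁ hT₁ a₁ ha₁ Q₁ ⟨aeval T₂ Q₂ v, hQ₂ v⟩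
  obtain ⟨y₂, hy₂, hcy₂⟩ := key_aux A₀ cl T₂ hT₂ a₂ ha₂ Q₂ ⟨aeval T₁ Q₁ v, hQ₁ v⟩
  have : y₁ = y₂ := by
    apply Subtype.ext
    rw [hy₁, hy₂]
    have := congrArg (fun f => f v) hcQ
    simpa [Module.End.mul_apply] using this
  rw [← hcy₁, ← hcy₂, this]
end

section
/- Let l be a prime, n ≥ 1, M = l^n, and d ≥ 1. Let J be the standard symplectic 2d×2d matrix (block form [[0, I_d], [−I_d, 0]]) over ℤ/Mℤ, and let Sp_{2d}(ℤ/Mℤ) = { S ∈ GL_{2d}(ℤ/Mℤ) : Sᵀ J S = J }. Let H be an additive subgroup of (ℤ/Mℤ)^{2d} such that S·x ∈ H for every S ∈ Sp_{2d}(ℤ/Mℤ) and every x ∈ H (matrix–vector multiplication). Then there exists k with 0 ≤ k ≤ n such that H = l^k · (ℤ/Mℤ)^{2d}, the subgroup of all elements divisible by l^k. -/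
/-- The standard symplectic `2d × 2d` matrix `[[0, I], [-I, 0]]` over a ring:
entry `(i, j)` is `1` if `j = i + d`, `-1` if `i = j + d`, and `0` otherwise. -/
def stdSympMatrix (R : Type*) [Ring R] (d : ℕ) : Matrix (Fin (2 * d)) (Fin (2 * d)) R :=
  Matrix.of fun i j =>
    if i.val + d = j.val then 1 else if j.val + d = i.val then -1 else 0

namespace L224

open Matrix

variable {R : Type*} [CommRing R] {d : ℕ}

lemma stdSymp_eq_sub (hd : 0 < d) :
    stdSympMatrix R d =
      (Matrix.of fun i j : Fin (2 * d) => if i.val + d = j.val then (1 : R) else 0) -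
      (Matrix.of fun i j : Fin (2 * d) => if i.val + d = j.val then (1 : R) else 0)ᵀ := by
  ext i j
  simp only [stdSympMatrix, Matrix.sub_apply, Matrix.transpose_apply, Matrix.of_apply]
  split_ifs <;> first | (exfalso; omega) | ring

lemma omega_self (hd : 0 < d) (x : Fin (2 * d) → R) :
    x ⬝ᵥ (stdSympMatrix R d *ᵥ x) = 0 := by
  rw [stdSymp_eq_sub hd, Matrix.sub_mulVec, dotProduct_sub, Matrix.dotProduct_mulVec,
    Matrix.mulVec_transpose, dotProduct_comm x, sub_self]

lemma J_transpose (hd : 0 < d) :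
    (stdSympMatrix R d)ᵀ = -stdSympMatrix R d := by
  ext i j
  simp only [stdSympMatrix, Matrix.transpose_apply, Matrix.neg_apply, Matrix.of_apply]
  split_ifs <;> first | (exfalso; omega) | ring

lemma vecMul_J (hd : 0 < d) (x : Fin (2 * d) → R) :
    x ᵥ* stdSympMatrix R d = -(stdSympMatrix R d *ᵥ x) := by
  conv_lhs => rw [← Matrix.transpose_transpose (stdSympMatrix R d),
    Matrix.vecMul_transpose]
  rw [J_transpose hd, Matrix.neg_mulVec]

lemma mulVec_J (hd : 0 < d) (x : Fin (2 * d) → R) :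
    stdSympMatrix R d *ᵥ x = -(x ᵥ* stdSympMatrix R d) := by
  rw [vecMul_J hd, neg_neg]

section helpers

variable {m n p : Type*} [Fintype m] [Fintype n] [Fintype p]

lemma vecMulVec_mul (a : m → R) (b : n → R) (M : Matrix n p R) :
    Matrix.vecMulVec a b * M = Matrix.vecMulVec a (b ᵥ* M) := by
  ext i j
  simp only [Matrix.mul_apply, Matrix.vecMulVec_apply, Matrix.vecMul, dotProduct,
    Finset.mul_sum, mul_assoc]

lemma mul_vecMulVec (M : Matrix m n R) (a : n → R) (b : p → R) :
    M * Matrix.vecMulVec a b = Matrix.vecMulVec (M *ᵥ a) b := by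
  ext i j
  simp only [Matrix.mul_apply, Matrix.vecMulVec_apply, Matrix.mulVec, dotProduct,
    Finset.sum_mul, mul_assoc]

lemma vecMulVec_mul_vecMulVec (a : m → R) (b c : n → R) (e : p → R) :
    Matrix.vecMulVec a b * Matrix.vecMulVec c e = (b ⬝ᵥ c) • Matrix.vecMulVec a e := by
  ext i j
  simp only [Matrix.mul_apply, Matrix.vecMulVec_apply, Matrix.smul_apply, dotProduct,
    smul_eq_mul, Finset.sum_mul]
  exact Finset.sum_congr rfl fun k _ => by ring

lemma vecMulVec_mulVec (a : m → R) (b : n → R) (x : n → R) :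
    Matrix.vecMulVec a b *ᵥ x = (b ⬝ᵥ x) • a := by
  funext i
  simp only [Matrix.mulVec, Matrix.vecMulVec_apply, dotProduct, Pi.smul_apply,
    smul_eq_mul, Finset.sum_mul]
  exact Finset.sum_congr rfl fun k _ => by ring

lemma vecMulVec_neg (a : m → R) (b : n → R) :
    Matrix.vecMulVec a (-b) = -Matrix.vecMulVec a b := by
  ext i j
  simp [Matrix.vecMulVec_apply]

end helpers

/-- symplectic transvection -/
def tv (c : R) {d : ℕ} (v : Fin (2 * d) → R) :
    Matrix (Fin (2 * d)) (Fin (2 * d)) R :=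
  1 + c • Matrix.vecMulVec v (stdSympMatrix R d *ᵥ v)

lemma tv_mulVec (hd : 0 < d) (c : R) (v x : Fin (2 * d) → R) :
    tv c v *ᵥ x = x + (c * (x ⬝ᵥ (stdSympMatrix R d *ᵥ v))) • v := by
  rw [tv, Matrix.add_mulVec, Matrix.one_mulVec, Matrix.smul_mulVec,
    vecMulVec_mulVec, smul_smul, dotProduct_comm]

lemma tv_mul_tv_neg (hd : 0 < d) (c : R) (v : Fin (2 * d) → R) :
    tv c v * tv (-c) v = 1 := by
  have hAA : Matrix.vecMulVec v (stdSympMatrix R d *ᵥ v) *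
      Matrix.vecMulVec v (stdSympMatrix R d *ᵥ v) = 0 := by
    rw [vecMulVec_mul_vecMulVec, dotProduct_comm, omega_self hd, zero_smul]
  have h1 : (c • Matrix.vecMulVec v (stdSympMatrix R d *ᵥ v)) *
      ((-c) • Matrix.vecMulVec v (stdSympMatrix R d *ᵥ v)) = 0 := by
    rw [Matrix.smul_mul, Matrix.mul_smul, hAA, smul_zero, smul_zero]
  rw [tv, tv, mul_add, mul_one, add_mul, one_mul, h1, add_zero, neg_smul]
  abel

lemma tv_isUnit (hd : 0 < d) (c : R) (v : Fin (2 * d) → R) : IsUnit (tv c v) :=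
  ⟨⟨tv c v, tv (-c) v, tv_mul_tv_neg hd c v,
    mul_eq_one_comm.mp (tv_mul_tv_neg hd c v)⟩, rfl⟩

lemma tv_symp (hd : 0 < d) (c : R) (v : Fin (2 * d) → R) :
    (tv c v)ᵀ * stdSympMatrix R d * tv c v = stdSympMatrix R d := by
  have hAT : (Matrix.vecMulVec v (stdSympMatrix R d *ᵥ v))ᵀ =
      Matrix.vecMulVec (stdSympMatrix R d *ᵥ v) v := by
    ext i j
    simp [Matrix.vecMulVec_apply, Matrix.transpose_apply, mul_comm]
  have hAJ : Matrix.vecMulVec (stdSympMatrix R d *ᵥ v) v * stdSympMatrix R d =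
      -Matrix.vecMulVec (stdSympMatrix R d *ᵥ v) (stdSympMatrix R d *ᵥ v) := by
    rw [vecMulVec_mul, vecMul_J hd, vecMulVec_neg]
  have hJA : stdSympMatrix R d * Matrix.vecMulVec v (stdSympMatrix R d *ᵥ v) =
      Matrix.vecMulVec (stdSympMatrix R d *ᵥ v) (stdSympMatrix R d *ᵥ v) :=
    mul_vecMulVec _ _ _
  have hBA : Matrix.vecMulVec (stdSympMatrix R d *ᵥ v) (stdSympMatrix R d *ᵥ v) *
      Matrix.vecMulVec v (stdSympMatrix R d *ᵥ v) = 0 := by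
    rw [vecMulVec_mul_vecMulVec, dotProduct_comm, omega_self hd, zero_smul]
  rw [tv, Matrix.transpose_add, Matrix.transpose_one, Matrix.transpose_smul, hAT]
  rw [add_mul, one_mul, Matrix.smul_mul, hAJ]
  rw [mul_add, mul_one, add_mul, Matrix.mul_smul, hJA, Matrix.smul_mul,
    Matrix.neg_mul, Matrix.mul_smul, hBA, smul_zero, neg_zero, smul_zero, add_zero,
    smul_neg]
  abel

/-- One transvection suffices when the symplectic pairing of u and w is a unit. -/
lemma exists_symp_of_unit (hd : 0 < d) (u w : Fin (2 * d) → R)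
    (h : IsUnit (u ⬝ᵥ (stdSympMatrix R d *ᵥ w))) :
    ∃ S : Matrix (Fin (2 * d)) (Fin (2 * d)) R, IsUnit S ∧
      Sᵀ * stdSympMatrix R d * S = stdSympMatrix R d ∧ S *ᵥ u = w := by
  refine ⟨tv (↑h.unit⁻¹) (w - u), tv_isUnit hd _ _, tv_symp hd _ _, ?_⟩
  rw [tv_mulVec hd]
  have h1 : u ⬝ᵥ (stdSympMatrix R d *ᵥ (w - u)) = u ⬝ᵥ (stdSympMatrix R d *ᵥ w) := by
    rw [Matrix.mulVec_sub, dotProduct_sub, omega_self hd, sub_zero]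
  rw [h1]
  have h2 : (↑h.unit⁻¹ : R) * (u ⬝ᵥ (stdSympMatrix R d *ᵥ w)) = 1 := by
    nth_rewrite 2 [← h.unit_spec]
    exact Units.inv_mul _
  rw [h2, one_smul, add_sub_cancel]

/-- primitivity is preserved by `ᵥ* J`. -/
lemma prim_vecMul_J (hd : 0 < d) (u : Fin (2 * d) → R) (i : Fin (2 * d))
    (hu : IsUnit (u i)) : ∃ j, IsUnit ((u ᵥ* stdSympMatrix R d) j) := by
  by_cases hi : i.val < d
  · refine ⟨⟨i.val + d, by omega⟩, ?_⟩
    have hsum : ∀ b ∈ Finset.univ, b ≠ i →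
        u b * stdSympMatrix R d b ⟨i.val + d, by omega⟩ = 0 := by
      intro b _ hb
      have hbv : b.val ≠ i.val := fun h => hb (Fin.ext h)
      have hb2 := b.isLt
      have h1 : ¬ (b.val + d = (⟨i.val + d, by omega⟩ : Fin (2 * d)).val) := by
        simp only [Fin.val_mk]; omega
      have h2 : ¬ ((⟨i.val + d, by omega⟩ : Fin (2 * d)).val + d = b.val) := by
        simp only [Fin.val_mk]; omega
      simp [stdSympMatrix, h1, h2, hbv]
    have hval : (u ᵥ* stdSympMatrix R d) ⟨i.val + d, by omega⟩ =
        u i * stdSympMatrix R d i ⟨i.val + d, by omega⟩ := by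
      simp only [Matrix.vecMul, dotProduct]
      exact Finset.sum_eq_single_of_mem i (Finset.mem_univ i) hsum
    rw [hval]
    have : stdSympMatrix R d i ⟨i.val + d, by omega⟩ = 1 := by
      simp [stdSympMatrix]
    rw [this, mul_one]
    exact hu
  · refine ⟨⟨i.val - d, by omega⟩, ?_⟩
    have hid : d ≤ i.val := le_of_not_gt hi
    have hsum : ∀ b ∈ Finset.univ, b ≠ i →
        u b * stdSympMatrix R d b ⟨i.val - d, by omega⟩ = 0 := by
      intro b _ hb
      have hbv : b.val ≠ i.val := fun h => hb (Fin.ext h)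
      have hb2 := b.isLt
      have h1 : ¬ (b.val + d = (⟨i.val - d, by omega⟩ : Fin (2 * d)).val) := by
        simp only [Fin.val_mk]; omega
      have h2 : ¬ ((⟨i.val - d, by omega⟩ : Fin (2 * d)).val + d = b.val) := by
        simp only [Fin.val_mk]; omega
      simp [stdSympMatrix, h1, h2]
    have hval : (u ᵥ* stdSympMatrix R d) ⟨i.val - d, by omega⟩ =
        u i * stdSympMatrix R d i ⟨i.val - d, by omega⟩ := by
      simp only [Matrix.vecMul, dotProduct]
      exact Finset.sum_eq_single_of_mem i (Finset.mem_univ i) hsum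
    rw [hval]
    have h1 : ¬ (i.val + d = (⟨i.val - d, by omega⟩ : Fin (2 * d)).val) := by
      have := i.isLt; simp only [Fin.val_mk]; omega
    have h2 : ((⟨i.val - d, by omega⟩ : Fin (2 * d)).val + d = i.val) := by
      simp only [Fin.val_mk]; omega
    have : stdSympMatrix R d i ⟨i.val - d, by omega⟩ = -1 := by
      simp [stdSympMatrix, h1, h2]
    rw [this, mul_neg_one]
    exact hu.neg

lemma prim_mulVec_J (hd : 0 < d) (w : Fin (2 * d) → R) (i : Fin (2 * d))
    (hw : IsUnit (w i)) : ∃ j, IsUnit ((stdSympMatrix R d *ᵥ w) j) := by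
  obtain ⟨j, hj⟩ := prim_vecMul_J hd w i hw
  refine ⟨j, ?_⟩
  rw [mulVec_J hd]
  simpa using hj.neg

end L224

/-- **Key step in Lemma 2.24.**  Let `l` be a prime, `M = lⁿ`, `d ≥ 1`, and let
`J` be the standard symplectic matrix over `ℤ/M`.  If an additive subgroup `H`
of `(ℤ/M)^{2d}` is stable under the symplectic group
`Sp_{2d}(ℤ/M) = {S ∈ GL : Sᵀ J S = J}` (acting by matrix-vector
multiplication), then `H = l^k · (ℤ/M)^{2d}` for some `0 ≤ k ≤ n`. -/
theorem lemma_2_24_key (l n d : ℕ) (hl : l.Prime) (hn : 1 ≤ n) (hd : 1 ≤ d)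
    (H : AddSubgroup (Fin (2 * d) → ZMod (l ^ n)))
    (hstab : ∀ S : Matrix (Fin (2 * d)) (Fin (2 * d)) (ZMod (l ^ n)),
      IsUnit S →
      S.transpose * stdSympMatrix (ZMod (l ^ n)) d * S = stdSympMatrix (ZMod (l ^ n)) d →
      ∀ x ∈ H, S.mulVec x ∈ H) :
    ∃ k : ℕ, k ≤ n ∧
      (H : Set (Fin (2 * d) → ZMod (l ^ n))) =
        {x | ∃ y : Fin (2 * d) → ZMod (l ^ n), x = ((l : ZMod (l ^ n)) ^ k) • y} := by
  classical
  haveI : NeZero (l ^ n) := ⟨pow_ne_zero _ hl.pos.ne'⟩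
  have hd0 : 0 < d := hd
  set R := ZMod (l ^ n) with hR
  open Matrix in
  -- basic unit facts in ZMod (l ^ n)
  have hlnu : ¬ IsUnit ((l : R)) := by
    intro h
    have hcop := (ZMod.isUnit_iff_coprime l (l ^ n)).mp h
    have h1 : l ∣ Nat.gcd l (l ^ n) := Nat.dvd_gcd dvd_rfl (dvd_pow_self l (by omega))
    rw [hcop] at h1
    have h2l := hl.two_le
    have := Nat.le_of_dvd one_pos h1
    omega
  have unit_or_dvd : ∀ r : R, IsUnit r ∨ (l : R) ∣ r := by
    intro r
    have hcast : ((r.val : ℕ) : R) = r := by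
      rw [ZMod.natCast_val, ZMod.cast_id]
    by_cases h : l ∣ r.val
    · right
      obtain ⟨c, hc⟩ := h
      exact ⟨(c : R), by rw [← Nat.cast_mul, ← hc, hcast]⟩
    · left
      have : Nat.Coprime r.val (l ^ n) :=
        Nat.Coprime.pow_right _ (((Nat.Prime.coprime_iff_not_dvd hl).mpr h).symm)
      have := (ZMod.isUnit_iff_coprime r.val (l ^ n)).mpr this
      rwa [hcast] at this
  have unit_add_dvd : ∀ a b : R, IsUnit a → (l : R) ∣ b → IsUnit (a + b) := by
    intro a b ha hb
    rcases unit_or_dvd (a + b) with h | h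
    · exact h
    · exfalso
      apply hlnu
      have h2 : (l : R) ∣ a := by
        have := h.sub hb
        rwa [add_sub_cancel_right] at this
      exact isUnit_of_dvd_unit h2 ha
  -- moving between primitive-scaled vectors
  have move : ∀ u w : Fin (2 * d) → R, (∃ i, IsUnit (u i)) → (∃ i, IsUnit (w i)) →
      ∀ r : R, r • u ∈ H → r • w ∈ H := by
    intro u w hu hw r hmem
    obtain ⟨iu, hiu⟩ := hu
    obtain ⟨iw, hiw⟩ := hw
    obtain ⟨ia, hia⟩ := L224.prim_vecMul_J hd0 u iu hiu
    obtain ⟨ib, hib⟩ := L224.prim_mulVec_J hd0 w iw hiw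
    -- choose intermediate z
    obtain ⟨z, hz1, hz2⟩ : ∃ z : Fin (2 * d) → R,
        IsUnit (u ⬝ᵥ (stdSympMatrix R d *ᵥ z)) ∧
        IsUnit (z ⬝ᵥ (stdSympMatrix R d *ᵥ w)) := by
      by_cases hboth : ∃ i, IsUnit ((u ᵥ* stdSympMatrix R d) i) ∧
          IsUnit ((stdSympMatrix R d *ᵥ w) i)
      · obtain ⟨i, h1, h2⟩ := hboth
        refine ⟨Pi.single i 1, ?_, ?_⟩
        · rw [Matrix.dotProduct_mulVec, dotProduct_single, mul_one]; exact h1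
        · rw [single_dotProduct, one_mul]; exact h2
      · push_neg at hboth
        have hbia : (l : R) ∣ (stdSympMatrix R d *ᵥ w) ia :=
          (unit_or_dvd _).resolve_left (hboth ia hia)
        have haib : (l : R) ∣ (u ᵥ* stdSympMatrix R d) ib := by
          rcases unit_or_dvd ((u ᵥ* stdSympMatrix R d) ib) with h | h
          · exact absurd hib (hboth ib h)
          · exact h
        refine ⟨Pi.single ia 1 + Pi.single ib 1, ?_, ?_⟩
        · rw [Matrix.dotProduct_mulVec, dotProduct_add, dotProduct_single,
            dotProduct_single, mul_one, mul_one]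
          exact unit_add_dvd _ _ hia haib
        · rw [add_dotProduct, single_dotProduct, single_dotProduct, one_mul, one_mul,
            add_comm]
          exact unit_add_dvd _ _ hib hbia
    obtain ⟨S₁, hS₁u, hS₁s, hS₁⟩ := L224.exists_symp_of_unit hd0 u z hz1
    obtain ⟨S₂, hS₂u, hS₂s, hS₂⟩ := L224.exists_symp_of_unit hd0 z w hz2
    have step1 : S₁ *ᵥ (r • u) ∈ H := hstab S₁ hS₁u hS₁s _ hmem
    rw [Matrix.mulVec_smul, hS₁] at step1
    have step2 : S₂ *ᵥ (r • z) ∈ H := hstab S₂ hS₂u hS₂s _ step1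
    rwa [Matrix.mulVec_smul, hS₂] at step2
  -- content decomposition
  have content : ∀ x : Fin (2 * d) → R, x ≠ 0 →
      ∃ m, m < n ∧ ∃ p : Fin (2 * d) → R, x = (l : R) ^ m • p ∧ ∃ i, IsUnit (p i) := by
    intro x hx0
    have hxne : ∃ i, x i ≠ 0 := by
      by_contra h
      push_neg at h
      exact hx0 (funext h)
    haveI : Nonempty (Fin (2 * d)) := ⟨⟨0, by omega⟩⟩
    have hne : (Finset.univ : Finset (Fin (2 * d))).Nonempty := Finset.univ_nonempty
    set f : Fin (2 * d) → ℕ :=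
      fun i => if x i = 0 then n else (x i).val.factorization l with hf
    set m := Finset.univ.inf' hne f with hm
    have hfl : ∀ i, x i ≠ 0 → f i < n := by
      intro i hi
      have hv : (x i).val ≠ 0 := fun h => hi ((ZMod.val_eq_zero _).mp h)
      simp only [hf, if_neg hi]
      by_contra hge
      push_neg at hge
      have h1 : l ^ n ∣ (x i).val :=
        dvd_trans (pow_dvd_pow l hge) (Nat.ordProj_dvd _ l)
      have h2 := Nat.le_of_dvd (Nat.pos_of_ne_zero hv) h1
      have h3 := ZMod.val_lt (x i)
      omega
    have hmn : m < n := by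
      obtain ⟨j, hj⟩ := hxne
      exact lt_of_le_of_lt (Finset.inf'_le _ (Finset.mem_univ j)) (hfl j hj)
    have hdvd : ∀ i, l ^ m ∣ (x i).val := by
      intro i
      by_cases hi : x i = 0
      · rw [(ZMod.val_eq_zero _).mpr hi]
        exact dvd_zero _
      · have h1 : m ≤ f i := Finset.inf'_le _ (Finset.mem_univ i)
        simp only [hf, if_neg hi] at h1
        exact dvd_trans (pow_dvd_pow l h1) (Nat.ordProj_dvd _ l)
    obtain ⟨i₀, -, hi₀⟩ := Finset.exists_mem_eq_inf' hne f
    have hxi₀ : x i₀ ≠ 0 := by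
      intro h
      rw [← hm] at hi₀
      rw [hi₀] at hmn
      simp only [hf, if_pos h] at hmn
      omega
    have hv0 : (x i₀).val ≠ 0 := fun h => hxi₀ ((ZMod.val_eq_zero _).mp h)
    refine ⟨m, hmn, fun i => (((x i).val / l ^ m : ℕ) : R), ?_, i₀, ?_⟩
    · funext i
      have hcast : (((x i).val : ℕ) : R) = x i := by
        rw [ZMod.natCast_val, ZMod.cast_id]
      have key : ((l ^ m * ((x i).val / l ^ m) : ℕ) : R) =
          (l : R) ^ m * (((x i).val / l ^ m : ℕ) : R) := by
        push_cast
        exact (Nat.cast_mul (α := R) (l ^ m) ((x i).val / l ^ m)).trans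
          (congrArg (· * (((x i).val / l ^ m : ℕ) : R)) (Nat.cast_pow (α := R) l m))
      rw [Nat.mul_div_cancel' (hdvd i), hcast] at key
      rw [Pi.smul_apply, smul_eq_mul]
      exact key
    · have hm_eq : m = (x i₀).val.factorization l := by
        rw [← hm] at hi₀
        rw [hi₀]
        simp only [hf, if_neg hxi₀]
      have hnd : ¬ l ∣ ((x i₀).val / l ^ m) := by
        rw [hm_eq]
        exact Nat.not_dvd_ordCompl hl hv0
      have hcop : Nat.Coprime ((x i₀).val / l ^ m) (l ^ n) :=
        Nat.Coprime.pow_right _ (((Nat.Prime.coprime_iff_not_dvd hl).mpr hnd).symm)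
      exact (ZMod.isUnit_iff_coprime _ _).mpr hcop
  -- the reference primitive vector
  set i0 : Fin (2 * d) := ⟨0, by omega⟩ with hi0
  set e : Fin (2 * d) → R := Pi.single i0 1 with he
  have prim_e : ∃ i, IsUnit (e i) := ⟨i0, by simp [he, Pi.single_eq_same]⟩
  set P : ℕ → Prop := fun k => ((l : R) ^ k) • e ∈ H with hP
  have hPn : P n := by
    have : ((l : R) ^ n) = 0 := by
      rw [← Nat.cast_pow, ZMod.natCast_self]
    simp only [hP, this, zero_smul]
    exact zero_mem H
  have hPex : ∃ k, P k := ⟨n, hPn⟩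
  refine ⟨Nat.find hPex, Nat.find_min' hPex hPn, ?_⟩
  set k := Nat.find hPex with hk
  ext x
  simp only [SetLike.mem_coe, Set.mem_setOf_eq]
  constructor
  · intro hx
    by_cases hx0 : x = 0
    · exact ⟨0, by simp [hx0]⟩
    obtain ⟨m, hmn, p, hx_eq, ip, hp⟩ := content x hx0
    have h1 : (l : R) ^ m • p ∈ H := hx_eq ▸ hx
    have h2 : (l : R) ^ m • e ∈ H := move p e ⟨ip, hp⟩ prim_e _ h1
    have hkm : k ≤ m := Nat.find_min' hPex h2
    refine ⟨(l : R) ^ (m - k) • p, ?_⟩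
    rw [hx_eq, smul_smul, ← pow_add, Nat.add_sub_cancel' hkm]
  · rintro ⟨y, rfl⟩
    have hk_mem : (l : R) ^ k • e ∈ H := Nat.find_spec hPex
    by_cases hy : ∃ i, IsUnit (y i)
    · exact move e y prim_e hy _ hk_mem
    · push_neg at hy
      have hy0 : (l : R) ∣ y i0 := (unit_or_dvd _).resolve_left (hy i0)
      have h1 : IsUnit ((y + e) i0) := by
        have : (y + e) i0 = 1 + y i0 := by
          simp [he, Pi.single_eq_same, add_comm]
        rw [this]
        exact unit_add_dvd _ _ isUnit_one hy0
      have h2 : (l : R) ^ k • (y + e) ∈ H := move e (y + e) prim_e ⟨i0, h1⟩ _ hk_mem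
      have h3 : (l : R) ^ k • y = (l : R) ^ k • (y + e) - (l : R) ^ k • e := by
        rw [← smul_sub, add_sub_cancel_right]
      rw [h3]
      exact sub_mem h2 hk_mem
end

section
/- Let p be a prime, 𝔽 a field with p² elements, and σ : 𝔽 → 𝔽 the Frobenius automorphism x ↦ x^p. Let V be a 3-dimensional 𝔽-vector space, regarded also as a 6-dimensional 𝔽_p-vector space, equipped with an 𝔽_p-bilinear form E : V × V → 𝔽_p that is alternating, nondegenerate, and satisfies E(c·x, y) = E(x, σ(c)·y) for all c ∈ 𝔽 and x, y ∈ V. Fix v ∈ V, v ≠ 0, with E(v, c·v) = 0 for all c ∈ 𝔽, and set D₂ = 𝔽·v and D₂^⊥ = {x ∈ V : E(x,d) = 0 for all d ∈ D₂}. If W ⊆ V is a Lagrangian (a 3-dimensional 𝔽_p-subspace with E vanishing identically on W × W) and D₂ ⊆ W, then W ⊆ D₂^⊥, the 𝔽-subspace 𝔽·W generated by W equals D₂^⊥, and dim_𝔽(𝔽·W) = 2. -/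
/-- **Part of Lemma 4.3.12.**  Let `𝔽` be a field with `p²` elements, `V` a
3-dimensional `𝔽`-vector space (hence a 6-dimensional `𝔽_p`-space), and
`E : V × V → 𝔽_p` an alternating nondegenerate `𝔽_p`-bilinear form with
`E(c·x, y) = E(x, σ(c)·y)` where `σ(c) = c^p` is the Frobenius.  Let `v ≠ 0`
with `E(v, c·v) = 0` for all `c ∈ 𝔽`, and `D₂ = 𝔽·v`.  If `W` is a Lagrangian
(3-dimensional `𝔽_p`-subspace on which `E` vanishes) containing `D₂`, then
`W ⊆ D₂^⊥`, the `𝔽`-span of `W` equals `D₂^⊥`, and `dim_𝔽 (𝔽·W) = 2`. -/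
theorem lemma_4_3_12_part1 (p : ℕ) (hp : p.Prime)
    (𝔽 : Type*) [Field 𝔽] [Fintype 𝔽] (hcard : Fintype.card 𝔽 = p ^ 2)
    (V : Type*) [AddCommGroup V] [Module 𝔽 V]
    [Module (ZMod p) V] [Algebra (ZMod p) 𝔽] [IsScalarTower (ZMod p) 𝔽 V]
    (hV : Module.finrank 𝔽 V = 3)
    (E : V →ₗ[ZMod p] V →ₗ[ZMod p] ZMod p)
    (halt : ∀ x : V, E x x = 0)
    (hnd : ∀ x : V, (∀ y : V, E x y = 0) → x = 0)
    (hadj : ∀ (c : 𝔽) (x y : V), E (c • x) y = E x ((c ^ p) • y))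
    (v : V) (hv0 : v ≠ 0) (hvE : ∀ c : 𝔽, E v (c • v) = 0)
    (W : Submodule (ZMod p) V)
    (hW3 : Module.finrank (ZMod p) W = 3)
    (hWiso : ∀ x ∈ W, ∀ y ∈ W, E x y = 0)
    (hD₂W : ((Submodule.span 𝔽 {v} : Submodule 𝔽 V) : Set V) ⊆ (W : Set V)) :
    (W : Set V) ⊆ {x : V | ∀ d ∈ (Submodule.span 𝔽 {v} : Submodule 𝔽 V), E x d = 0} ∧
    ((Submodule.span 𝔽 (W : Set V) : Submodule 𝔽 V) : Set V) =
      {x : V | ∀ d ∈ (Submodule.span 𝔽 {v} : Submodule 𝔽 V), E x d = 0} ∧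
    Module.finrank 𝔽 ↥(Submodule.span 𝔽 (W : Set V)) = 2 := by
  haveI : Fact p.Prime := ⟨hp⟩
  haveI : FiniteDimensional 𝔽 V := .of_finrank_eq_succ hV
  haveI : Module.Finite (ZMod p) 𝔽 := Module.Finite.of_finite
  haveI : Module.Finite (ZMod p) V := Module.Finite.trans 𝔽 V
  -- Frobenius dimension of 𝔽 over ZMod p
  have hF2 : Module.finrank (ZMod p) 𝔽 = 2 := by
    have := Module.card_eq_pow_finrank (K := ZMod p) (V := 𝔽)
    rw [ZMod.card, hcard] at this
    exact (Nat.pow_right_injective hp.two_le this.symm)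
  have hV6 : Module.finrank (ZMod p) V = 6 := by
    have := Module.finrank_mul_finrank (ZMod p) 𝔽 V
    rw [hF2, hV] at this; omega
  -- skew symmetry
  have hAlt : E.IsAlt := halt
  have hRefl : E.IsRefl := hAlt.isRefl
  -- dim of restricted scalars submodule
  have key : ∀ S : Submodule 𝔽 V,
      Module.finrank (ZMod p) (S.restrictScalars (ZMod p)) = 2 * Module.finrank 𝔽 S := by
    intro S
    have h := Module.finrank_mul_finrank (ZMod p) 𝔽 ↥(S.restrictScalars (ZMod p))
    rw [(Submodule.restrictScalarsEquiv (ZMod p) 𝔽 V S).finrank_eq, hF2] at h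
    omega
  set D₂ : Submodule 𝔽 V := Submodule.span 𝔽 {v} with hD₂def
  have hW_perp : (W : Set V) ⊆ {x : V | ∀ d ∈ D₂, E x d = 0} := by
    intro x hx d hd
    exact hWiso x hx d (hD₂W hd)
  -- the perp as an 𝔽-submodule
  have hstab : ∀ (c : 𝔽) (x : V), (∀ d ∈ D₂, E x d = 0) → ∀ d ∈ D₂, E (c • x) d = 0 := by
    intro c x hx d hd
    rw [hadj]
    exact hx _ (D₂.smul_mem _ hd)
  let P : Submodule 𝔽 V :=
    { carrier := {x : V | ∀ d ∈ D₂, E x d = 0}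
      add_mem' := fun {a b} ha hb d hd => by simp [ha d hd, hb d hd]
      zero_mem' := fun d hd => by simp
      smul_mem' := fun c x hx => hstab c x hx }
  -- P as orthogonal complement
  have hPorth : P.restrictScalars (ZMod p) = LinearMap.BilinForm.orthogonal E (D₂.restrictScalars (ZMod p)) := by
    ext x
    constructor
    · intro hx n hn; exact hRefl x n (hx n hn)
    · intro hx d hd; exact hRefl d x (hx d hd)
  have hD₂dim : Module.finrank (ZMod p) (D₂.restrictScalars (ZMod p)) = 2 := by
    rw [key, finrank_span_singleton hv0]
  have hPdim' : Module.finrank (ZMod p) (P.restrictScalars (ZMod p)) = 4 := by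
    rw [hPorth, LinearMap.BilinForm.finrank_orthogonal ((LinearMap.IsRefl.nondegenerate_iff_separatingLeft hRefl).2 hnd) _, hD₂dim, hV6]
  have hPdim : Module.finrank 𝔽 P = 2 := by
    have := key P; omega
  set S : Submodule 𝔽 V := Submodule.span 𝔽 (W : Set V) with hSdef
  have hSP : S ≤ P := Submodule.span_le.2 hW_perp
  have hWS : W ≤ S.restrictScalars (ZMod p) := fun x hx => Submodule.subset_span hx
  have hSge : 2 ≤ Module.finrank 𝔽 S := by
    have h1 : Module.finrank (ZMod p) W ≤ Module.finrank (ZMod p) (S.restrictScalars (ZMod p)) :=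
      Submodule.finrank_mono hWS
    have := key S
    omega
  have hSle : Module.finrank 𝔽 S ≤ 2 := hPdim ▸ Submodule.finrank_mono hSP
  have hSP' : S = P := Submodule.eq_of_le_of_finrank_le hSP (by omega)
  refine ⟨hW_perp, ?_, by omega⟩
  rw [hSP']
  rfl
end

section
/- Let p be a prime, 𝔽 a field with p² elements, and σ : 𝔽 → 𝔽 the Frobenius automorphism x ↦ x^p. Let V be a 3-dimensional 𝔽-vector space, regarded also as a 6-dimensional 𝔽_p-vector space, equipped with an 𝔽_p-bilinear form E : V × V → 𝔽_p that is alternating, nondegenerate, and satisfies E(c·x, y) = E(x, σ(c)·y) for all c ∈ 𝔽 and x, y ∈ V. Fix v ∈ V, v ≠ 0, with E(v, c·v) = 0 for all c ∈ 𝔽, and set D₂ = 𝔽·v. If W ⊆ V is a Lagrangian (a 3-dimensional 𝔽_p-subspace with E vanishing identically on W × W) such that the 𝔽-subspace 𝔽·W generated by W has dim_𝔽(𝔽·W) = 2, then either W ∩ D₂ = 0 or D₂ ⊆ W; i.e., dim_{𝔽_p}(W ∩ D₂) ≠ 1. -/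
open Module Submodule

lemma aux_isotropic_bound {K V : Type*} [Field K] [AddCommGroup V] [Module K V]
    [FiniteDimensional K V]
    (E : V →ₗ[K] V →ₗ[K] K) (hnd : ∀ x : V, (∀ y : V, E x y = 0) → x = 0)
    (M : Submodule K V) (hiso : ∀ x ∈ M, ∀ y ∈ M, E x y = 0) :
    2 * Module.finrank K M ≤ Module.finrank K V := by
  have hEinj : Function.Injective (E : V →ₗ[K] Module.Dual K V) := by
    rw [← LinearMap.ker_eq_bot, LinearMap.ker_eq_bot']
    intro x hx
    exact hnd x fun y => by simp [hx]
  have hEsurj : Function.Surjective (E : V →ₗ[K] Module.Dual K V) :=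
    (LinearMap.injective_iff_surjective_of_finrank_eq_finrank
      (Subspace.dual_finrank_eq (K := K) (V := V)).symm).mp hEinj
  set Φ : V →ₗ[K] Module.Dual K M := M.dualRestrict ∘ₗ E with hΦ
  have hΦsurj : Function.Surjective Φ :=
    (Subspace.dualRestrict_surjective (W := M)).comp hEsurj
  have hMker : M ≤ LinearMap.ker Φ := by
    intro x hx
    rw [LinearMap.mem_ker]
    ext m
    exact hiso x hx m m.2
  have hrn := LinearMap.finrank_range_add_finrank_ker Φ
  rw [LinearMap.range_eq_top.mpr hΦsurj, finrank_top, Subspace.dual_finrank_eq] at hrn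
  have h1 : Module.finrank K M ≤ Module.finrank K (LinearMap.ker Φ) :=
    Submodule.finrank_mono hMker
  omega

lemma aux_span_pair_top {K A : Type*} [Field K] [AddCommGroup A] [Module K A]
    [FiniteDimensional K A] (h2 : Module.finrank K A = 2)
    {u γ : A} (hu : u ≠ 0) (hγ : γ ∉ Submodule.span K {u}) :
    Submodule.span K {u, γ} = ⊤ := by
  have hle : Submodule.span K {u} ≤ Submodule.span K ({u, γ} : Set A) :=
    Submodule.span_mono (by simp)
  have hlt : Submodule.span K {u} < Submodule.span K ({u, γ} : Set A) :=
    lt_of_le_of_ne hle (fun h => hγ (h ▸ Submodule.subset_span (by simp)))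
  have h1 : Module.finrank K (Submodule.span K ({u} : Set A)) = 1 :=
    finrank_span_singleton hu
  have h3 := Submodule.finrank_lt_finrank_of_lt hlt
  have h4 := Submodule.finrank_le (Submodule.span K ({u, γ} : Set A))
  apply Submodule.eq_top_of_finrank_eq
  omega


/-- **Part of Lemma 4.3.12.**  Let `𝔽` be a field with `p²` elements, `V` a
3-dimensional `𝔽`-vector space (hence a 6-dimensional `𝔽_p`-space), and
`E : V × V → 𝔽_p` an alternating nondegenerate `𝔽_p`-bilinear form with
`E(c·x, y) = E(x, σ(c)·y)` where `σ(c) = c^p` is the Frobenius.  Let `v ≠ 0`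
with `E(v, c·v) = 0` for all `c ∈ 𝔽`, and `D₂ = 𝔽·v`.  If `W` is a Lagrangian
(3-dimensional `𝔽_p`-subspace on which `E` vanishes) whose `𝔽`-span is
2-dimensional, then either `W ∩ D₂ = 0` or `D₂ ⊆ W`. -/
theorem lemma_4_3_12_part2 (p : ℕ) (hp : p.Prime)
    (𝔽 : Type*) [Field 𝔽] [Fintype 𝔽] (hcard : Fintype.card 𝔽 = p ^ 2)
    (V : Type*) [AddCommGroup V] [Module 𝔽 V]
    [Module (ZMod p) V] [Algebra (ZMod p) 𝔽] [IsScalarTower (ZMod p) 𝔽 V]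
    (hV : Module.finrank 𝔽 V = 3)
    (E : V →ₗ[ZMod p] V →ₗ[ZMod p] ZMod p)
    (halt : ∀ x : V, E x x = 0)
    (hnd : ∀ x : V, (∀ y : V, E x y = 0) → x = 0)
    (hadj : ∀ (c : 𝔽) (x y : V), E (c • x) y = E x ((c ^ p) • y))
    (v : V) (hv0 : v ≠ 0) (hvE : ∀ c : 𝔽, E v (c • v) = 0)
    (W : Submodule (ZMod p) V)
    (hW3 : Module.finrank (ZMod p) W = 3)
    (hWiso : ∀ x ∈ W, ∀ y ∈ W, E x y = 0)
    (hspan : Module.finrank 𝔽 ↥(Submodule.span 𝔽 (W : Set V)) = 2) :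
    W ⊓ (Submodule.span 𝔽 {v}).restrictScalars (ZMod p) = ⊥ ∨
      (Submodule.span 𝔽 {v}).restrictScalars (ZMod p) ≤ W := by
  haveI : Fact p.Prime := ⟨hp⟩
  by_contra hcon
  push_neg at hcon
  obtain ⟨hne, hnle⟩ := hcon
  set D := (Submodule.span 𝔽 {v}).restrictScalars (ZMod p) with hD
  -- dimensions
  haveI : FiniteDimensional 𝔽 V := FiniteDimensional.of_finrank_pos (by rw [hV]; norm_num)
  haveI : FiniteDimensional (ZMod p) 𝔽 := Module.Finite.of_finite
  have hdim2 : Module.finrank (ZMod p) 𝔽 = 2 := by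
    have h := card_eq_pow_finrank (K := ZMod p) (V := 𝔽)
    rw [ZMod.card, hcard] at h
    exact (Nat.pow_right_injective hp.two_le h.symm)
  haveI : FiniteDimensional (ZMod p) V := FiniteDimensional.trans (ZMod p) 𝔽 V
  have hdimV : Module.finrank (ZMod p) V = 6 := by
    have h := Module.finrank_mul_finrank (ZMod p) 𝔽 V
    rw [hdim2, hV] at h
    omega
  -- the intersection vector w
  obtain ⟨w, hwmem, hw0⟩ := (Submodule.ne_bot_iff _).mp hne
  have hwW : w ∈ W := hwmem.1
  have hwD : w ∈ Submodule.span 𝔽 {v} := hwmem.2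
  obtain ⟨c₀, hc₀⟩ := Submodule.mem_span_singleton.mp hwD
  have hc0ne : c₀ ≠ 0 := by rintro rfl; rw [zero_smul] at hc₀; exact hw0 hc₀.symm
  -- skew symmetry
  have hskew : ∀ x y : V, E x y = -E y x := by
    intro x y
    have h := halt (x + y)
    simp only [map_add, LinearMap.add_apply, halt x, halt y] at h
    linear_combination h
  -- E vanishes on 𝔽w × 𝔽w
  have hww : ∀ a b : 𝔽, E (a • w) (b • w) = 0 := by
    intro a b
    rw [← hc₀, smul_smul, smul_smul, hadj, smul_smul]
    exact hvE _
  -- choose γ with {1, γ} an 𝔽ₚ-basis of 𝔽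
  obtain ⟨γ, hγ⟩ : ∃ γ : 𝔽, γ ∉ Submodule.span (ZMod p) {(1 : 𝔽)} := by
    by_contra h
    push_neg at h
    have htop : Submodule.span (ZMod p) {(1 : 𝔽)} = ⊤ := eq_top_iff.mpr fun x _ => h x
    have h1 : Module.finrank (ZMod p) (Submodule.span (ZMod p) {(1 : 𝔽)}) = 1 :=
      finrank_span_singleton one_ne_zero
    rw [htop, finrank_top, hdim2] at h1
    omega
  have hspan1γ : Submodule.span (ZMod p) {(1 : 𝔽), γ} = ⊤ :=
    aux_span_pair_top hdim2 one_ne_zero hγ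
  have hdec : ∀ c : 𝔽, ∃ s t : ZMod p, c • w = s • w + t • (γ • w) := by
    intro c
    obtain ⟨s, t, hst⟩ := Submodule.mem_span_pair.mp
      (hspan1γ ▸ Submodule.mem_top : c ∈ Submodule.span (ZMod p) {(1 : 𝔽), γ})
    refine ⟨s, t, ?_⟩
    rw [← hst, add_smul, smul_assoc, smul_assoc, one_smul]
  by_cases hcase : ∀ x ∈ W, E x (γ • w) = 0
  · -- Case 1 : all of W is orthogonal to 𝔽·w ; then W ⊔ D is isotropic of dim ≥ 4
    have hWDc : ∀ x ∈ W, ∀ c : 𝔽, E x (c • w) = 0 := by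
      intro x hx c
      obtain ⟨s, t, hst⟩ := hdec c
      rw [hst, map_add, map_smul, map_smul, hWiso x hx w hwW, hcase x hx]
      simp
    have hDw : ∀ u ∈ D, ∃ a : 𝔽, a • w = u := by
      intro u hu
      obtain ⟨a, ha⟩ := Submodule.mem_span_singleton.mp
        ((Submodule.restrictScalars_mem _ _ _).mp hu)
      exact ⟨a * c₀⁻¹, by
        rw [← hc₀, smul_smul, mul_assoc, inv_mul_cancel₀ hc0ne, mul_one, ha]⟩
    have hMiso : ∀ x ∈ W ⊔ D, ∀ y ∈ W ⊔ D, E x y = 0 := by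
      intro x hx y hy
      obtain ⟨x₁, hx₁, x₂, hx₂, rfl⟩ := Submodule.mem_sup.mp hx
      obtain ⟨y₁, hy₁, y₂, hy₂, rfl⟩ := Submodule.mem_sup.mp hy
      obtain ⟨a, rfl⟩ := hDw x₂ hx₂
      obtain ⟨b, rfl⟩ := hDw y₂ hy₂
      simp only [map_add, LinearMap.add_apply]
      rw [hWiso x₁ hx₁ y₁ hy₁, hWDc x₁ hx₁ b, hww a b,
        hskew (a • w) y₁, hWDc y₁ hy₁ a]
      ring
    -- dimension count
    have hinf_lt : W ⊓ D < D := by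
      refine lt_of_le_of_ne inf_le_right (fun h => hnle ?_)
      rw [← h]; exact inf_le_left
    have hinf := Submodule.finrank_lt_finrank_of_lt hinf_lt
    have hsum := Submodule.finrank_sup_add_finrank_inf_eq W D
    have hbound := aux_isotropic_bound E hnd (W ⊔ D) hMiso
    rw [hdimV] at hbound
    omega
  · -- Case 2
    push_neg at hcase
    obtain ⟨z, hzW, hzne⟩ := hcase
    -- the kernel of x ↦ E x (γ•w) on W has dimension ≥ 2
    set g : ↥W →ₗ[ZMod p] ZMod p := (E.flip (γ • w)).domRestrict W with hg
    have hker2 : 2 ≤ Module.finrank (ZMod p) (LinearMap.ker g) := by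
      have hrn := LinearMap.finrank_range_add_finrank_ker g
      have hr1 : Module.finrank (ZMod p) (LinearMap.range g) ≤ 1 :=
        le_trans (Submodule.finrank_le _) (le_of_eq (Module.finrank_self _))
      rw [hW3] at hrn
      omega
    set w' : ↥W := ⟨w, hwW⟩ with hw'
    have hx' : ¬ (LinearMap.ker g ≤ Submodule.span (ZMod p) {w'}) := by
      intro h
      have h1 := Submodule.finrank_mono h
      have h2 : Module.finrank (ZMod p)
          (Submodule.span (ZMod p) ({w'} : Set ↥W)) ≤ 1 := by
        have hw'0 : w' ≠ 0 := by
          intro h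
          exact hw0 (by simpa [hw'] using congrArg Subtype.val h)
        exact le_of_eq (finrank_span_singleton hw'0)
      omega
    obtain ⟨x', hx'ker, hx'ns⟩ := SetLike.not_le_iff_exists.mp hx'
    set x : V := (x' : V) with hxdef
    have hxW : x ∈ W := x'.2
    have hxg : E x (γ • w) = 0 := hx'ker
    have hxns : x ∉ Submodule.span (ZMod p) {w} := by
      intro hmem
      obtain ⟨t, ht⟩ := Submodule.mem_span_singleton.mp hmem
      exact hx'ns (Submodule.mem_span_singleton.mpr
        ⟨t, Subtype.ext (by simpa using ht)⟩)
    have hxc : ∀ c : 𝔽, E x (c • w) = 0 := by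
      intro c
      obtain ⟨s, t, hst⟩ := hdec c
      rw [hst, map_add, map_smul, map_smul, hWiso x hxW w hwW, hxg]
      simp
    -- z is not an 𝔽-multiple of w
    have hzw : ∀ a : 𝔽, z ≠ a • w := by
      intro a h
      exact hzne (by rw [h]; exact hww a γ)
    -- {w, z} is 𝔽-independent, hence spans U
    have hindep : LinearIndependent 𝔽 ![w, z] := by
      rw [LinearIndependent.pair_iff]
      intro s t hst
      by_cases ht : t = 0
      · subst ht
        rw [zero_smul, add_zero] at hst
        rcases smul_eq_zero.mp hst with hs | hw
        · exact ⟨hs, rfl⟩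
        · exact absurd hw hw0
      · exfalso
        apply hzw (-(t⁻¹ * s))
        have hts : t • z = -(s • w) := by linear_combination (norm := module) hst
        have hz : z = t⁻¹ • (t • z) := by rw [smul_smul, inv_mul_cancel₀ ht, one_smul]
        rw [hz, hts, smul_neg, smul_smul, neg_smul]
    have hwzle : Submodule.span 𝔽 ({w, z} : Set V) ≤ Submodule.span 𝔽 (W : Set V) := by
      apply Submodule.span_le.mpr
      intro u hu
      rcases hu with rfl | hu
      · exact Submodule.subset_span hwW
      · simp only [Set.mem_singleton_iff] at hu
        subst hu
        exact Submodule.subset_span hzW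
    have hwzeq : Submodule.span 𝔽 ({w, z} : Set V) = Submodule.span 𝔽 (W : Set V) := by
      apply Submodule.eq_of_le_of_finrank_le hwzle
      rw [hspan]
      -- finrank of span {w,z} ≥ 2
      have hzsp : z ∉ Submodule.span 𝔽 ({w} : Set V) := by
        intro h
        obtain ⟨a, ha⟩ := Submodule.mem_span_singleton.mp h
        exact hzw a ha.symm
      have hlt : Submodule.span 𝔽 ({w} : Set V) < Submodule.span 𝔽 ({w, z} : Set V) :=
        lt_of_le_of_ne (Submodule.span_mono (by simp))
          (fun h => hzsp (h ▸ Submodule.subset_span (by simp)))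
      have h1 : Module.finrank 𝔽 (Submodule.span 𝔽 ({w} : Set V)) = 1 :=
        finrank_span_singleton hw0
      have := Submodule.finrank_lt_finrank_of_lt hlt
      omega
    have hxU : x ∈ Submodule.span 𝔽 ({w, z} : Set V) := by
      rw [hwzeq]; exact Submodule.subset_span hxW
    obtain ⟨a, b, hab⟩ := Submodule.mem_span_pair.mp hxU
    have hb0 : b = 0 := by
      by_contra hb
      have hbp : (b : 𝔽) ^ p ≠ 0 := pow_ne_zero p hb
      have h := hxc ((b ^ p)⁻¹ * γ)
      rw [← hab, map_add, LinearMap.add_apply, hww a _, hadj, smul_smul,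
        ← mul_assoc, mul_inv_cancel₀ hbp, one_mul] at h
      simp only [zero_add] at h
      exact hzne h
    rw [hb0, zero_smul, add_zero] at hab
    -- so x = a • w with a ∉ 𝔽ₚ
    have ha : a ∉ Submodule.span (ZMod p) {(1 : 𝔽)} := by
      intro hmem
      obtain ⟨t, ht⟩ := Submodule.mem_span_singleton.mp hmem
      apply hxns
      refine Submodule.mem_span_singleton.mpr ⟨t, ?_⟩
      rw [← hab, ← ht, smul_assoc, one_smul]
    have hspa : Submodule.span (ZMod p) {(1 : 𝔽), a} = ⊤ :=
      aux_span_pair_top hdim2 one_ne_zero ha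
    -- conclude D ≤ W, contradiction
    apply hnle
    intro u hu
    obtain ⟨c, hc⟩ := Submodule.mem_span_singleton.mp
      ((Submodule.restrictScalars_mem _ _ _).mp hu)
    have hu' : (c * c₀⁻¹) • w = u := by
      rw [← hc₀, smul_smul, mul_assoc, inv_mul_cancel₀ hc0ne, mul_one, hc]
    obtain ⟨s, t, hst⟩ := Submodule.mem_span_pair.mp
      (hspa ▸ Submodule.mem_top : (c * c₀⁻¹) ∈ Submodule.span (ZMod p) {(1 : 𝔽), a})
    have : u = s • w + t • x := by
      rw [← hu', ← hst, add_smul, smul_assoc, smul_assoc, one_smul, hab]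
    rw [this]
    exact W.add_mem (W.smul_mem s hwW) (W.smul_mem t hxW)
end

section
/- Let p be a prime, 𝔽 a field with p² elements, and σ : 𝔽 → 𝔽 the Frobenius automorphism x ↦ x^p. Let V be a 3-dimensional 𝔽-vector space, regarded also as a 6-dimensional 𝔽_p-vector space, equipped with an 𝔽_p-bilinear form E : V × V → 𝔽_p that is alternating, nondegenerate, and satisfies E(c·x, y) = E(x, σ(c)·y) for all c ∈ 𝔽 and x, y ∈ V. Let U ⊆ V be an 𝔽-subspace with dim_𝔽 U = 2 such that U^⊥ ⊆ U, where U^⊥ = {x ∈ V : E(x,u) = 0 for all u ∈ U}. Then U^⊥ is a 1-dimensional 𝔽-subspace on which E vanishes identically, and it is the unique 1-dimensional 𝔽-subspace L ⊆ U with E(x,y) = 0 for all x, y ∈ L. -/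
open Module LinearMap


/-- **Auxiliary claim in the proof of Lemma 4.3.12.**  Let `𝔽` be a field with
`p²` elements, `V` a 3-dimensional `𝔽`-vector space (hence a 6-dimensional
`𝔽_p`-space), and `E : V × V → 𝔽_p` an alternating nondegenerate
`𝔽_p`-bilinear form with `E(c·x, y) = E(x, c^p·y)`.  If `U ⊆ V` is a
2-dimensional `𝔽`-subspace with `U^⊥ ⊆ U`, then `U^⊥` is a 1-dimensional
isotropic `𝔽`-subspace, and it is the unique 1-dimensional `𝔽`-subspace of `U`
on which `E` vanishes identically. -/
theorem lemma_4_3_12_aux (p : ℕ) (hp : p.Prime)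
    (𝔽 : Type*) [Field 𝔽] [Fintype 𝔽] (hcard : Fintype.card 𝔽 = p ^ 2)
    (V : Type*) [AddCommGroup V] [Module 𝔽 V]
    [Module (ZMod p) V] [Algebra (ZMod p) 𝔽] [IsScalarTower (ZMod p) 𝔽 V]
    (hV : Module.finrank 𝔽 V = 3)
    (E : V →ₗ[ZMod p] V →ₗ[ZMod p] ZMod p)
    (halt : ∀ x : V, E x x = 0)
    (hnd : ∀ x : V, (∀ y : V, E x y = 0) → x = 0)
    (hadj : ∀ (c : 𝔽) (x y : V), E (c • x) y = E x ((c ^ p) • y))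
    (U : Submodule 𝔽 V) (hU2 : Module.finrank 𝔽 U = 2)
    (hUperp : {x : V | ∀ u ∈ U, E x u = 0} ⊆ (U : Set V)) :
    ∃ L : Submodule 𝔽 V,
      (L : Set V) = {x : V | ∀ u ∈ U, E x u = 0} ∧
      Module.finrank 𝔽 L = 1 ∧
      (∀ x ∈ L, ∀ y ∈ L, E x y = 0) ∧
      ∀ L' : Submodule 𝔽 V, L' ≤ U → Module.finrank 𝔽 L' = 1 →
        (∀ x ∈ L', ∀ y ∈ L', E x y = 0) → L' = L := by
  classical
  haveI : Fact p.Prime := ⟨hp⟩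
  have halt' : E.IsAlt := halt
  have hrefl : E.IsRefl := halt'.isRefl
  have hndE : LinearMap.BilinForm.Nondegenerate E :=
    hrefl.nondegenerate_iff_separatingLeft.mpr hnd
  have h2 : Module.finrank (ZMod p) 𝔽 = 2 := by
    have h := card_eq_pow_finrank (K := ZMod p) (V := 𝔽)
    rw [ZMod.card, hcard] at h
    exact (Nat.pow_right_injective hp.two_le h.symm)
  haveI : FiniteDimensional 𝔽 V := FiniteDimensional.of_finrank_pos (by omega)
  haveI : FiniteDimensional (ZMod p) V := FiniteDimensional.trans (ZMod p) 𝔽 V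
  have hV6 : Module.finrank (ZMod p) V = 6 := by
    have := Module.finrank_mul_finrank (ZMod p) 𝔽 V
    rw [h2, hV] at this; omega
  have hU4 : Module.finrank (ZMod p) (U.restrictScalars (ZMod p)) = 4 := by
    have h := Module.finrank_mul_finrank (ZMod p) 𝔽 ↥U
    rw [h2, hU2] at h
    exact h.symm.trans rfl
  -- the perp as a ZMod p submodule
  set P : Submodule (ZMod p) V := LinearMap.BilinForm.orthogonal E (U.restrictScalars (ZMod p))
    with hPdef
  have hPset : (P : Set V) = {x : V | ∀ u ∈ U, E x u = 0} := by
    ext x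
    simp only [SetLike.mem_coe, hPdef, LinearMap.BilinForm.mem_orthogonal_iff, Set.mem_setOf_eq]
    exact ⟨fun h u hu => hrefl _ _ (h u hu), fun h u hu => hrefl _ _ (h u hu)⟩
  have hP2 : Module.finrank (ZMod p) P = 2 := by
    rw [hPdef, LinearMap.BilinForm.finrank_orthogonal hndE, hV6, hU4]
  -- the 𝔽-submodule with the same carrier
  set L : Submodule 𝔽 V :=
    { carrier := {x : V | ∀ u ∈ U, E x u = 0}
      add_mem' := fun ha hb u hu => by
        rw [map_add, LinearMap.add_apply, ha u hu, hb u hu, add_zero]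
      zero_mem' := fun u hu => by simp
      smul_mem' := fun c x hx u hu => by
        rw [hadj]; exact hx _ (U.smul_mem _ hu) } with hLdef
  have hLrs : L.restrictScalars (ZMod p) = P := by
    apply Submodule.ext
    intro x
    have : x ∈ P ↔ x ∈ (P : Set V) := Iff.rfl
    rw [this, hPset]
    exact Iff.rfl
  have hLrk2 : Module.finrank (ZMod p) ↥L = 2 := by
    have : Module.finrank (ZMod p) ↥(L.restrictScalars (ZMod p)) = 2 := by rw [hLrs]; exact hP2
    exact this
  have hL1 : Module.finrank 𝔽 L = 1 := by
    have h := Module.finrank_mul_finrank (ZMod p) 𝔽 ↥L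
    rw [h2, hLrk2] at h
    omega
  have hLU : L ≤ U := fun x hx => hUperp hx
  refine ⟨L, rfl, hL1, fun x hx y hy => hx y (hUperp hy), ?_⟩
  intro L' hL'U hL'1 hL'iso
  by_cases hcase : L' = L
  · exact hcase
  · exfalso
    -- L' ⊔ L = U
    have hsup_le : L' ⊔ L ≤ U := sup_le hL'U hLU
    have hlt : L' < L' ⊔ L := by
      refine lt_of_le_of_ne le_sup_left fun h => ?_
      have hLle : L ≤ L' := h ▸ le_sup_right
      exact hcase (Submodule.eq_of_le_of_finrank_le hLle (by omega)).symm
    have h2le : 2 ≤ Module.finrank 𝔽 ↥(L' ⊔ L) := by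
      have := Submodule.finrank_lt_finrank_of_lt hlt
      omega
    have hsup : L' ⊔ L = U := by
      apply Submodule.eq_of_le_of_finrank_le hsup_le
      rw [hU2]
      exact h2le
    -- every x in L' is perpendicular to all of U, hence in L
    have hL'L : L' ≤ L := by
      intro x hx
      intro u hu
      rw [← hsup] at hu
      obtain ⟨a, ha, b, hb, rfl⟩ := Submodule.mem_sup.mp hu
      have h1 : E x a = 0 := hL'iso x hx a ha
      have h2' : E x b = 0 := hrefl _ _ (hb x (hL'U hx))
      rw [map_add, h1, h2', add_zero]
    have : L' = L := Submodule.eq_of_le_of_finrank_le hL'L (by omega)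
    exact hcase this
end
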